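/- arXiv:2105.02099 — 2 statements merged into one kernel-verified Lean document; each statement's English description precedes it below -/
import Mathlib

section
/- Every safe strategy σ satisfies the safety objective when loaded with the minimal safety vector: for every state s with ml_S(s) ≤ cap and every initial load d with ml_S(s) ≤ d ≤ cap, all σ-compatible runs from s loaded with d are safe. In particular, along every finite σ-compatible path α from s loaded with d, the last resource level satisfies lastLevel(α) ≥ ml_S(last(α)) ≠ ⊥. -/
open Classical

/-- A consumption Markov decision process. -/
structure CMDP (S A : Type) [Fintype S] [Fintype A] where
  /-- transition function -/
  δ : S → A → S → NNReal
  δ_sum : ∀ s a, ∑ t, δ s a t = 1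
  /-- consumption function -/
  γ : S → A → ℕ
  /-- reload states -/
  R : Finset S
  /-- capacity -/
  cap : ℕ

namespace CMDP

variable {S A : Type} [Fintype S] [Fintype A] [DecidableEq S] [DecidableEq A]

/-- successors with positive transition probability -/
noncomputable def Succ (M : CMDP S A) (s : S) (a : A) : Finset S :=
  Finset.univ.filter (fun t => 0 < M.δ s a t)

/-- A (history-dependent) strategy: takes the initial load, the history
(list of state-action steps performed so far) and the current state. -/
def Strat (S A : Type) := ℕ → List (S × A) → S → A

/-- An infinite run: a sequence of states and actions. -/
structure Run (S A : Type) where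
  st : ℕ → S
  ac : ℕ → A

/-- the history (list of steps) formed by the first `i` steps of a run -/
def hist (ρ : Run S A) (i : ℕ) : List (S × A) :=
  (List.range i).map (fun j => (ρ.st j, ρ.ac j))

/-- a run is compatible with strategy `σ` under initial load `d` -/
def Compatible (M : CMDP S A) (σ : Strat S A) (d : ℕ) (ρ : Run S A) : Prop :=
  ∀ i, ρ.ac i = σ d (hist ρ i) (ρ.st i) ∧ 0 < M.δ (ρ.st i) (ρ.ac i) (ρ.st (i+1))

/-- one step of the resource-level evolution; `none` is ⊥ (exhaustion) -/
def nextLevel (M : CMDP S A) (s : S) (a : A) : Option ℕ → Option ℕ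
  | none => none
  | some l =>
      if s ∈ M.R then (if M.γ s a ≤ M.cap then some (M.cap - M.γ s a) else none)
      else (if M.γ s a ≤ l then some (l - M.γ s a) else none)

/-- resource levels along a path, starting from initial load `d` -/
def levels (M : CMDP S A) (d : ℕ) (st : ℕ → S) (ac : ℕ → A) : ℕ → Option ℕ
  | 0 => some d
  | i+1 => M.nextLevel (st i) (ac i) (levels M d st ac i)

/-- a run loaded with `d` is safe: ⊥ never occurs among the resource levels -/
def SafeRun (M : CMDP S A) (d : ℕ) (ρ : Run S A) : Prop :=
  ∀ i, levels M d ρ.st ρ.ac i ≠ none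

/-- all `σ`-compatible runs from `s` loaded with `d` are safe -/
def AllSafe (M : CMDP S A) (σ : Strat S A) (s : S) (d : ℕ) : Prop :=
  ∀ ρ : Run S A, Compatible M σ d ρ → ρ.st 0 = s → SafeRun M d ρ

/-- the resource level after a finite history -/
def levelOfHist (M : CMDP S A) (d : ℕ) (h : List (S × A)) : Option ℕ :=
  h.foldl (fun r p => M.nextLevel p.1 p.2 r) (some d)

/-- action value of `a` in `s` based on vector `v` -/
noncomputable def AV (M : CMDP S A) (v : S → ℕ∞) (s : S) (a : A) : ℕ∞ :=
  (M.γ s a : ℕ∞) + (M.Succ s a).sup v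

/-- the Bellman-style functional 𝓕 -/
noncomputable def Ffun (M : CMDP S A) (T : Finset S) (v : S → ℕ∞) : S → ℕ∞ :=
  fun s => if s ∈ T then 0 else Finset.univ.inf (fun a => M.AV v s a)

/-- the initial vector `x_T`: 0 on `T` and ∞ elsewhere -/
noncomputable def xT (T : Finset S) : S → ℕ∞ := fun s => if s ∈ T then 0 else ⊤

/-- truncation to zero on `T` -/
noncomputable def trunc0 (T : Finset S) (v : S → ℕ∞) : S → ℕ∞ :=
  fun s => if s ∈ T then 0 else v s

/-- the functional 𝓖 (for reachability in at least one step) -/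
noncomputable def Gfun (M : CMDP S A) (T : Finset S) (v : S → ℕ∞) : S → ℕ∞ :=
  fun s => Finset.univ.inf (fun a => M.AV (trunc0 T v) s a)

/-- bounded non-reloading reachability objective `Reach_T^i` -/
def NRReachB (M : CMDP S A) (T : Finset S) (i : ℕ) (d : ℕ) (ρ : Run S A) : Prop :=
  ∃ f ≤ i, ρ.st f ∈ T ∧ (∑ j ∈ Finset.range f, M.γ (ρ.st j) (ρ.ac j)) ≤ d

/-- non-reloading reachability objective -/
def NRReach (M : CMDP S A) (T : Finset S) (d : ℕ) (ρ : Run S A) : Prop :=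
  ∃ i, NRReachB M T i d ρ

/-- non-reloading reachability in at least one step -/
def NRReachPlus (M : CMDP S A) (T : Finset S) (d : ℕ) (ρ : Run S A) : Prop :=
  ∃ f, 1 ≤ f ∧ ρ.st f ∈ T ∧ (∑ j ∈ Finset.range f, M.γ (ρ.st j) (ρ.ac j)) ≤ d

/-- sure satisfaction of an objective from `s` loaded with `d` -/
def SureSat (M : CMDP S A) (σ : Strat S A) (s : S) (d : ℕ)
    (O : ℕ → Run S A → Prop) : Prop :=
  ∀ ρ, Compatible M σ d ρ → ρ.st 0 = s → O d ρ

/-- a vector of loads is sufficient for surely satisfying an objective -/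
def SatVec (M : CMDP S A) (O : ℕ → Run S A → Prop) (x : S → ℕ∞) : Prop :=
  ∃ σ : Strat S A, ∀ s (d : ℕ), x s = (d : ℕ∞) → SureSat M σ s d O

/-- `x` is the componentwise-minimal vector satisfying `Sat` -/
def IsML {S : Type} (Sat : (S → ℕ∞) → Prop) (x : S → ℕ∞) : Prop :=
  Sat x ∧ ∀ y, Sat y → x ≤ y

/-- a vector of loads is sufficient for safety -/
def SafetySat (M : CMDP S A) (x : S → ℕ∞) : Prop :=
  ∃ σ : Strat S A, ∀ s (d : ℕ), x s = (d : ℕ∞) → AllSafe M σ s d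

/-- a decreasing CMDP: every cycle contains a positive-consumption transition -/
def Decreasing (M : CMDP S A) : Prop :=
  ∀ (n : ℕ) (st : ℕ → S) (ac : ℕ → A), 0 < n →
    (∀ i < n, 0 < M.δ (st i) (ac i) (st (i+1))) → st 0 = st n →
    ∃ i < n, 0 < M.γ (st i) (ac i)

/-- a valid finite path of length `n` -/
def ValidPath (M : CMDP S A) (n : ℕ) (st : ℕ → S) (ac : ℕ → A) : Prop :=
  ∀ i < n, 0 < M.δ (st i) (ac i) (st (i+1))

/-- a simple path: no proper infix forms a cycle -/
def SimplePath (M : CMDP S A) (n : ℕ) (st : ℕ → S) (ac : ℕ → A) : Prop :=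
  ValidPath M n st ac ∧ ∀ i j, i < j → j ≤ n → st i = st j → i = 0 ∧ j = n

/-- probability, under strategy `σ` with load `d` and past history `h`, that the
next `n` steps (states s₁ … s_{n+1}) avoid `T`. -/
noncomputable def probAvoid (M : CMDP S A) (T : Finset S) (σ : Strat S A) (d : ℕ) :
    ℕ → List (S × A) → S → NNReal
  | 0, _, s => if s ∈ T then 0 else 1
  | n+1, h, s =>
      if s ∈ T then 0 else
      ∑ t, M.δ s (σ d h s) t * probAvoid M T σ d n (h ++ [(s, σ d h s)]) t

/-- probability, under strategy `σ` with load `d` and past history `h`, that the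
next `n` steps contain fewer than `k` visits to `T`. -/
noncomputable def probFew (M : CMDP S A) (T : Finset S) (σ : Strat S A) (d : ℕ) :
    ℕ → ℕ → List (S × A) → S → NNReal
  | 0, k, _, s => if k ≤ (if s ∈ T then 1 else 0) then 0 else 1
  | n+1, k, h, s =>
      if k ≤ (if s ∈ T then 1 else 0) then 0 else
      ∑ t, M.δ s (σ d h s) t *
        probFew M T σ d n (k - (if s ∈ T then 1 else 0)) (h ++ [(s, σ d h s)]) t

/-- hope value of successor `s'` for `a` in `s`, based on `x` and safety vector `mlS` -/
noncomputable def HV (M : CMDP S A) (mlS : S → ℕ∞) (x : S → ℕ∞)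
    (s : S) (a : A) (s' : S) : ℕ∞ :=
  max (x s') (((M.Succ s a).erase s').sup mlS)

/-- safe value of `a` in `s` based on `x` and safety vector `mlS` -/
noncomputable def SV (M : CMDP S A) (mlS : S → ℕ∞) (x : S → ℕ∞) (s : S) (a : A) : ℕ∞ :=
  (M.γ s a : ℕ∞) + (M.Succ s a).inf (fun s' => HV M mlS x s a s')

/-- thresholded safe value: only successors with probability at least `θ` count -/
noncomputable def SVθ (M : CMDP S A) (mlS : S → ℕ∞) (θ : NNReal) (x : S → ℕ∞)
    (s : S) (a : A) : ℕ∞ :=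
  (M.γ s a : ℕ∞) +
    ((M.Succ s a).filter (fun s' => θ ≤ M.δ s a s')).inf (fun s' => HV M mlS x s a s')

/-- the truncation operator ⌈·⌉_{R'}^{cap} -/
noncomputable def truncRset (M : CMDP S A) (R' : Finset S) (x : S → ℕ∞) : S → ℕ∞ :=
  fun s => if (M.cap : ℕ∞) < x s then ⊤ else if s ∈ R' then 0 else x s

/-- the functional 𝓐 -/
noncomputable def Afun (M : CMDP S A) (T : Finset S) (mlS : S → ℕ∞)
    (x : S → ℕ∞) : S → ℕ∞ :=
  fun s => if s ∈ T then mlS s else Finset.univ.inf (fun a => SV M mlS x s a)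

/-- the operator 𝓑 = ⌈𝓐(·)⌉_R^cap -/
noncomputable def Bfun (M : CMDP S A) (T : Finset S) (mlS : S → ℕ∞)
    (x : S → ℕ∞) : S → ℕ∞ :=
  truncRset M M.R (Afun M T mlS x)

/-- the thresholded functional 𝓐_θ -/
noncomputable def Aθfun (M : CMDP S A) (T : Finset S) (mlS : S → ℕ∞) (θ : NNReal)
    (x : S → ℕ∞) : S → ℕ∞ :=
  fun s => if s ∈ T then mlS s else Finset.univ.inf (fun a => SVθ M mlS θ x s a)

/-- the thresholded operator 𝓑_θ -/
noncomputable def Bθfun (M : CMDP S A) (T : Finset S) (mlS : S → ℕ∞) (θ : NNReal)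
    (x : S → ℕ∞) : S → ℕ∞ :=
  truncRset M M.R (Aθfun M T mlS θ x)

/-- the initial vector `y_T`: `mlS` on `T` and ∞ elsewhere -/
noncomputable def yT (M : CMDP S A) (T : Finset S) (mlS : S → ℕ∞) : S → ℕ∞ :=
  fun s => if s ∈ T then mlS s else ⊤

/-- a vector of loads suffices for safely reaching `T` within `i` steps with
positive probability -/
def PosReachSatB (M : CMDP S A) (T : Finset S) (i : ℕ) (x : S → ℕ∞) : Prop :=
  ∃ σ : Strat S A, ∀ s (d : ℕ), x s = (d : ℕ∞) →
    AllSafe M σ s d ∧ probAvoid M T σ d i [] s < 1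

/-- a vector of loads suffices for safely reaching `T` with positive probability -/
def PosReachSat (M : CMDP S A) (T : Finset S) (x : S → ℕ∞) : Prop :=
  ∃ σ : Strat S A, ∀ s (d : ℕ), x s = (d : ℕ∞) →
    AllSafe M σ s d ∧ ∃ i, probAvoid M T σ d i [] s < 1

/-- a vector of loads suffices for safely reaching `T` almost surely -/
def ASReachSat (M : CMDP S A) (T : Finset S) (x : S → ℕ∞) : Prop :=
  ∃ σ : Strat S A, ∀ s (d : ℕ), x s = (d : ℕ∞) →
    d ≤ M.cap ∧ AllSafe M σ s d ∧ (⨅ n, probAvoid M T σ d n [] s) = 0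

/-- a vector of loads suffices for safely visiting `T` infinitely often a.s. -/
def ASBuchiSat (M : CMDP S A) (T : Finset S) (x : S → ℕ∞) : Prop :=
  ∃ σ : Strat S A, ∀ s (d : ℕ), x s = (d : ℕ∞) →
    d ≤ M.cap ∧ AllSafe M σ s d ∧ ∀ k : ℕ, (⨅ n, probFew M T σ d n k [] s) = 0

/-- a safe action in `s` with resource level `l` (w.r.t. the safety vector `mlS`) -/
def SafeAct (M : CMDP S A) (mlS : S → ℕ∞) (s : S) (l : ℕ) (a : A) : Prop :=
  AV M mlS s a ≤ (l : ℕ∞) ∨ (AV M mlS s a ≤ (M.cap : ℕ∞) ∧ s ∈ M.R) ∨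
    (M.cap : ℕ∞) < mlS s

/-- a safe strategy picks a safe action whenever one exists -/
def SafeStrat (M : CMDP S A) (mlS : S → ℕ∞) (σ : Strat S A) : Prop :=
  ∀ (d : ℕ) (h : List (S × A)) (s : S) (l : ℕ), levelOfHist M d h = some l →
    (∃ a, SafeAct M mlS s l a) → SafeAct M mlS s l (σ d h s)

/-- the CMDP `C(R')`: as `M`, but with reload set `R'` -/
def withReloads (M : CMDP S A) (R' : Finset S) : CMDP S A :=
  { M with R := R' }

/-- a finite-memory strategy -/
def FiniteMemory (σ : Strat S A) : Prop :=
  ∃ (Mem : Type) (_ : Finite Mem) (upd : Mem → S × A → Mem) (m0 : ℕ → Mem)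
    (out : Mem → S → A), ∀ d h s, σ d h s = out (h.foldl upd (m0 d)) s

/-- the modified CMDP C→T with a fresh absorbing reload state `sink = none` -/
noncomputable def toSink (M : CMDP S A) (T : Finset S) (mlS : S → ℕ∞) :
    CMDP (Option S) A where
  δ := fun s a t =>
    match s with
    | none => if t = none then 1 else 0
    | some s' =>
        if s' ∈ T then (if t = none then 1 else 0)
        else (match t with
              | none => 0
              | some t' => M.δ s' a t')
  δ_sum := by
    intro s a
    cases s with
    | none => simp [Fintype.sum_option]
    | some s' =>
        by_cases hs : s' ∈ T
        · simp [hs, Fintype.sum_option]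
        · simp [hs, Fintype.sum_option, M.δ_sum]
  γ := fun s a =>
    match s with
    | none => 1
    | some s' =>
        if s' ∈ T then (if mlS s' = ⊤ then M.cap + 1 else (mlS s').toNat)
        else M.γ s' a
  R := insert none (M.R.image some)
  cap := M.cap

end CMDP

section AuxStmt6
open CMDP

variable {S A : Type} [Fintype S] [Fintype A] [DecidableEq S] [DecidableEq A]

lemma succ_nonempty' (M : CMDP S A) (s : S) (a : A) : ∃ t, 0 < M.δ s a t := by
  by_contra h
  push_neg at h
  have h0 : ∑ t, M.δ s a t = 0 :=
    Finset.sum_eq_zero fun t _ => le_antisymm (h t) zero_le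
  rw [M.δ_sum] at h0
  exact one_ne_zero h0

lemma hist_zero' (ρ : Run S A) : hist ρ 0 = [] := by simp [hist]

lemma hist_succ' (ρ : Run S A) (n : ℕ) :
    hist ρ (n + 1) = hist ρ n ++ [(ρ.st n, ρ.ac n)] := by
  simp [hist, List.range_succ]

lemma hist_pos' (ρ : Run S A) (n : ℕ) :
    hist ρ (n + 1) = (ρ.st 0, ρ.ac 0) :: (List.range n).map (fun j => (ρ.st (j+1), ρ.ac (j+1))) := by
  simp [hist, List.range_succ_eq_map, List.map_map]

/-- prepend a step to a run -/
def prepRun (s : S) (a : A) (ρ : Run S A) : Run S A where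
  st := fun n => match n with | 0 => s | m+1 => ρ.st m
  ac := fun n => match n with | 0 => a | m+1 => ρ.ac m

lemma hist_prep (s : S) (a : A) (ρ : Run S A) (n : ℕ) :
    hist (prepRun s a ρ) (n + 1) = (s, a) :: hist ρ n := by
  simp [hist, List.range_succ_eq_map, List.map_map]
  exact ⟨⟨rfl, rfl⟩, fun i _ => ⟨rfl, rfl⟩⟩

lemma levels_prep (M : CMDP S A) (d l' : ℕ) (s : S) (a : A) (ρ : Run S A)
    (h : M.nextLevel s a (some d) = some l') :
    ∀ n, levels M d (prepRun s a ρ).st (prepRun s a ρ).ac (n + 1)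
      = levels M l' ρ.st ρ.ac n := by
  intro n
  induction n with
  | zero =>
      show M.nextLevel s a (some d) = some l'
      exact h
  | succ n ih =>
      show M.nextLevel (ρ.st n) (ρ.ac n)
          (levels M d (prepRun s a ρ).st (prepRun s a ρ).ac (n+1)) = _
      rw [ih]
      rfl

lemma levelOfHist_hist (M : CMDP S A) (d : ℕ) (ρ : Run S A) (n : ℕ) :
    levelOfHist M d (hist ρ n) = levels M d ρ.st ρ.ac n := by
  induction n with
  | zero => simp [hist_zero', levelOfHist, levels]
  | succ n ih =>
      rw [hist_succ']
      unfold levelOfHist at ih ⊢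
      rw [List.foldl_append, ih]
      rfl

noncomputable def stepf (M : CMDP S A) (σ : Strat S A) (d : ℕ) (p : S × List (S × A)) :
    S × List (S × A) :=
  ((succ_nonempty' M p.1 (σ d p.2 p.1)).choose, p.2 ++ [(p.1, σ d p.2 p.1)])

noncomputable def extRun (M : CMDP S A) (σ : Strat S A) (d : ℕ) (s : S) : Run S A where
  st := fun n => ((stepf M σ d)^[n] (s, [])).1
  ac := fun n => σ d ((stepf M σ d)^[n] (s, [])).2 ((stepf M σ d)^[n] (s, [])).1

lemma extRun_hist (M : CMDP S A) (σ : Strat S A) (d : ℕ) (s : S) :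
    ∀ n, ((stepf M σ d)^[n] (s, ([] : List (S × A)))).2 = hist (extRun M σ d s) n := by
  intro n
  induction n with
  | zero => simp [hist_zero']
  | succ n ih =>
      rw [Function.iterate_succ_apply', hist_succ', ← ih]
      rfl

lemma extRun_compat (M : CMDP S A) (σ : Strat S A) (d : ℕ) (s : S) :
    Compatible M σ d (extRun M σ d s) := by
  intro n
  constructor
  · show σ d ((stepf M σ d)^[n] (s, [])).2 _ = _
    rw [extRun_hist]
    rfl
  · show 0 < M.δ _ _ (((stepf M σ d)^[n+1] (s, [])).1)
    rw [Function.iterate_succ_apply']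
    exact (succ_nonempty' M ((stepf M σ d)^[n] (s, [])).1 _).choose_spec

lemma enat_sub_le' {g l : ℕ} {x : ℕ∞} (h : (g : ℕ∞) + x ≤ (l : ℕ∞)) :
    x ≤ ((l - g : ℕ) : ℕ∞) := by
  have hx : x ≠ ⊤ := by
    rintro rfl
    simp only [add_top, top_le_iff] at h
    exact (ENat.coe_ne_top l) h
  lift x to ℕ using hx
  have h' : g + x ≤ l := by exact_mod_cast h
  exact_mod_cast Nat.le_sub_of_add_le (by omega)

/-- key minimality lemma: after one step of the witnessing safe strategy,
the residual level dominates `mlS` of every successor. -/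
lemma key_min (M : CMDP S A) (mlS : S → ℕ∞) (hml : IsML (SafetySat M) mlS)
    (σ₀ : Strat S A) (hσ₀ : ∀ u (e : ℕ), mlS u = (e : ℕ∞) → AllSafe M σ₀ u e)
    (s : S) (d : ℕ) (hd : mlS s = (d : ℕ∞))
    (l' : ℕ) (hl' : M.nextLevel s (σ₀ d [] s) (some d) = some l')
    (t : S) (ht : 0 < M.δ s (σ₀ d [] s) t) :
    mlS t ≤ (l' : ℕ∞) := by
  set a := σ₀ d [] s with ha
  set y : S → ℕ∞ := fun u => if u = t then (l' : ℕ∞) else mlS u with hy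
  suffices hsat : SafetySat M y by
    have := hml.2 y hsat t
    simpa [hy] using this
  classical
  refine ⟨fun e h u =>
    if e = l' ∧ (match h with | [] => u | p :: _ => p.1) = t
    then σ₀ d ((s, a) :: h) u else σ₀ e h u, ?_⟩
  intro u e hyu ρ hρ h0
  by_cases hcase : e = l' ∧ u = t
  · obtain ⟨he, hu⟩ := hcase
    -- each step of ρ follows the continuation of σ₀
    have hhead : ∀ n, (match hist ρ n with | [] => ρ.st n | p :: _ => p.1) = ρ.st 0 := by
      intro n
      cases n with
      | zero => rw [hist_zero']
      | succ n => rw [hist_pos']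
    have hacts : ∀ n, ρ.ac n = σ₀ d ((s, a) :: hist ρ n) (ρ.st n) := by
      intro n
      have := (hρ n).1
      rw [this]
      beta_reduce
      rw [if_pos ⟨he, by rw [hhead n, h0]; exact hu⟩]
    -- prepend (s,a)
    have hcomp : Compatible M σ₀ d (prepRun s a ρ) := by
      intro n
      cases n with
      | zero =>
          constructor
          · show a = σ₀ d (hist (prepRun s a ρ) 0) s
            rw [hist_zero']
          · show 0 < M.δ s a (ρ.st 0)
            rw [h0, hu]; exact ht
      | succ n =>
          constructor
          · show ρ.ac n = _
            rw [hist_prep, hacts n]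
            rfl
          · exact (hρ n).2
    have hsafe : SafeRun M d (prepRun s a ρ) := hσ₀ s d hd (prepRun s a ρ) hcomp rfl
    rw [he]
    intro n
    have := hsafe (n + 1)
    rw [levels_prep M d l' s a ρ hl' n] at this
    exact this
  · -- ρ follows σ₀ directly with load e
    have hu : u ≠ t ∨ e ≠ l' := by
      by_contra hc
      push_neg at hc
      exact hcase ⟨hc.2, hc.1⟩
    have hmlu : mlS u = (e : ℕ∞) := by
      rcases hu with hu | he
      · simp only [hy] at hyu; simpa [hu] using hyu
      · simp only [hy] at hyu
        by_cases hut : u = t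
        · rw [if_pos hut] at hyu
          exact absurd (Nat.cast_injective hyu.symm) he
        · simpa [hut] using hyu
    have hhead : ∀ n, (match hist ρ n with | [] => ρ.st n | p :: _ => p.1) = ρ.st 0 := by
      intro n
      cases n with
      | zero => rw [hist_zero']
      | succ n => rw [hist_pos']
    have hcomp : Compatible M σ₀ e ρ := by
      intro n
      refine ⟨?_, (hρ n).2⟩
      have := (hρ n).1
      rw [this]
      beta_reduce
      rw [if_neg]
      rintro ⟨he, hh⟩
      rw [hhead n, h0] at hh
      rcases hu with hu | hewrong
      · exact hu hh
      · exact hewrong he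
    exact hσ₀ u e hmlu ρ hcomp h0

/-- existence of an action with small action-value, from the minimal safety vector -/
lemma exists_good_action (M : CMDP S A) (mlS : S → ℕ∞) (hml : IsML (SafetySat M) mlS)
    (s : S) (d : ℕ) (hd : mlS s = (d : ℕ∞)) :
    ∃ a, AV M mlS s a ≤ (if s ∈ M.R then (M.cap : ℕ∞) else (d : ℕ∞)) := by
  obtain ⟨σ₀, hσ₀⟩ := hml.1
  set a := σ₀ d [] s with ha
  refine ⟨a, ?_⟩
  -- build a compatible run to see the first step's level is defined
  have hcomp := extRun_compat M σ₀ d s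
  have hsafe : SafeRun M d (extRun M σ₀ d s) := hσ₀ s d hd _ hcomp rfl
  have h1 := hsafe 1
  have hlev1 : levels M d (extRun M σ₀ d s).st (extRun M σ₀ d s).ac 1
      = M.nextLevel s a (some d) := by
    show M.nextLevel ((extRun M σ₀ d s).st 0) ((extRun M σ₀ d s).ac 0) (some d) = _
    rfl
  rw [hlev1] at h1
  obtain ⟨l', hl'⟩ := Option.ne_none_iff_exists'.mp h1
  have hsuccle : ∀ t ∈ M.Succ s a, mlS t ≤ (l' : ℕ∞) := by
    intro t htm
    have htpos : 0 < M.δ s a t := by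
      simpa [CMDP.Succ] using htm
    exact key_min M mlS hml σ₀ hσ₀ s d hd l' hl' t htpos
  have hsup : (M.Succ s a).sup mlS ≤ (l' : ℕ∞) := Finset.sup_le hsuccle
  -- unpack nextLevel
  by_cases hR : s ∈ M.R
  · by_cases hγ : M.γ s a ≤ M.cap
    · have hl'' : l' = M.cap - M.γ s a := by
        simp [CMDP.nextLevel, hR, hγ] at hl'
        omega
      rw [if_pos hR]
      calc AV M mlS s a ≤ (M.γ s a : ℕ∞) + (l' : ℕ∞) := add_le_add_right hsup _
        _ = ((M.γ s a + l' : ℕ) : ℕ∞) := by push_cast; ring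
        _ = (M.cap : ℕ∞) := by rw [hl'']; congr 1; omega
    · exfalso
      simp [CMDP.nextLevel, hR, hγ] at hl'
  · by_cases hγ : M.γ s a ≤ d
    · have hl'' : l' = d - M.γ s a := by
        simp [CMDP.nextLevel, hR, hγ] at hl'
        omega
      rw [if_neg hR]
      calc AV M mlS s a ≤ (M.γ s a : ℕ∞) + (l' : ℕ∞) := add_le_add_right hsup _
        _ = ((M.γ s a + l' : ℕ) : ℕ∞) := by push_cast; ring
        _ = (d : ℕ∞) := by rw [hl'']; congr 1; omega
    · exfalso
      simp [CMDP.nextLevel, hR, hγ] at hl' 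

/-- a safe action preserves the invariant -/
lemma safeAct_step (M : CMDP S A) (mlS : S → ℕ∞) (s : S) (l : ℕ)
    (hlcap : l ≤ M.cap) (hmls : mlS s ≤ (l : ℕ∞)) (a : A)
    (ha : SafeAct M mlS s l a) :
    ∃ l2, M.nextLevel s a (some l) = some l2 ∧ l2 ≤ M.cap ∧
      ∀ t, 0 < M.δ s a t → mlS t ≤ (l2 : ℕ∞) := by
  have hmem : ∀ t, 0 < M.δ s a t → mlS t ≤ (M.Succ s a).sup mlS := by
    intro t htpos
    exact Finset.le_sup (by simpa [CMDP.Succ] using htpos)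
  rcases ha with hAV | ⟨hAV, hR⟩ | hbig
  · -- AV ≤ l
    have hγl : (M.γ s a : ℕ∞) ≤ (l : ℕ∞) :=
      le_trans (le_self_add) hAV
    have hγl' : M.γ s a ≤ l := by exact_mod_cast hγl
    have hsub : (M.Succ s a).sup mlS ≤ ((l - M.γ s a : ℕ) : ℕ∞) := enat_sub_le' hAV
    by_cases hR : s ∈ M.R
    · refine ⟨M.cap - M.γ s a, ?_, Nat.sub_le _ _, ?_⟩
      · have hγcap : M.γ s a ≤ M.cap := le_trans hγl' hlcap
        simp [CMDP.nextLevel, hR, hγcap]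
      · intro t htpos
        refine le_trans (le_trans (hmem t htpos) hsub) ?_
        exact_mod_cast Nat.sub_le_sub_right hlcap _
    · refine ⟨l - M.γ s a, ?_, le_trans (Nat.sub_le _ _) hlcap, ?_⟩
      · simp [CMDP.nextLevel, hR, hγl']
      · intro t htpos
        exact le_trans (hmem t htpos) hsub
  · -- AV ≤ cap and s ∈ R
    have hγc : (M.γ s a : ℕ∞) ≤ (M.cap : ℕ∞) := le_trans (le_self_add) hAV
    have hγc' : M.γ s a ≤ M.cap := by exact_mod_cast hγc
    have hsub : (M.Succ s a).sup mlS ≤ ((M.cap - M.γ s a : ℕ) : ℕ∞) := enat_sub_le' hAV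
    refine ⟨M.cap - M.γ s a, ?_, Nat.sub_le _ _, ?_⟩
    · simp [CMDP.nextLevel, hR, hγc']
    · intro t htpos
      exact le_trans (hmem t htpos) hsub
  · exact absurd (lt_of_lt_of_le hbig (le_trans hmls (by exact_mod_cast hlcap))) (lt_irrefl _)

end AuxStmt6

open CMDP in
/-- every safe strategy satisfies the safety objective when loaded
with the minimal safety vector; in particular along every compatible path the
resource level stays at least `ml_S` of the current state (and is never ⊥). -/
theorem stmt6 {S A : Type} [Fintype S] [Fintype A] [DecidableEq S] [DecidableEq A]
    (M : CMDP S A) (mlS : S → ℕ∞)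
    (hml : IsML (SafetySat M) mlS)
    (σ : Strat S A) (hσ : SafeStrat M mlS σ) :
    ∀ (s : S) (d : ℕ), mlS s ≤ (d : ℕ∞) → d ≤ M.cap →
      ∀ ρ : Run S A, Compatible M σ d ρ → ρ.st 0 = s →
        SafeRun M d ρ ∧
        ∀ i : ℕ, ∃ l : ℕ, levels M d ρ.st ρ.ac i = some l ∧ mlS (ρ.st i) ≤ (l : ℕ∞) := by
  intro s d hds hdcap ρ hρ h0
  have inv : ∀ i, ∃ l : ℕ, levels M d ρ.st ρ.ac i = some l ∧
      mlS (ρ.st i) ≤ (l : ℕ∞) ∧ l ≤ M.cap := by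
    intro i
    induction i with
    | zero => exact ⟨d, rfl, by rw [h0]; exact hds, hdcap⟩
    | succ i ih =>
        obtain ⟨l, hl, hml_i, hlc⟩ := ih
        -- mlS (ρ.st i) is finite
        have hfin : mlS (ρ.st i) ≠ ⊤ := by
          intro h
          rw [h] at hml_i
          exact (ENat.coe_ne_top l) (top_le_iff.mp hml_i)
        have he : mlS (ρ.st i) = ((mlS (ρ.st i)).toNat : ℕ∞) := (ENat.coe_toNat hfin).symm
        set e := (mlS (ρ.st i)).toNat with hedef
        obtain ⟨a₀, ha₀⟩ := exists_good_action M mlS hml (ρ.st i) e he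
        have hex : ∃ a, SafeAct M mlS (ρ.st i) l a := by
          refine ⟨a₀, ?_⟩
          by_cases hR : ρ.st i ∈ M.R
          · exact Or.inr (Or.inl ⟨by simpa [hR] using ha₀, hR⟩)
          · refine Or.inl ?_
            rw [if_neg hR] at ha₀
            exact le_trans ha₀ (le_trans (le_of_eq he.symm) hml_i)
        have hlevh : levelOfHist M d (hist ρ i) = some l := by
          rw [levelOfHist_hist]; exact hl
        have hsafeact := hσ d (hist ρ i) (ρ.st i) l hlevh hex
        rw [← (hρ i).1] at hsafeact
        obtain ⟨l2, hnext, hl2c, hml2⟩ :=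
          safeAct_step M mlS (ρ.st i) l hlc hml_i (ρ.ac i) hsafeact
        refine ⟨l2, ?_, hml2 _ (hρ i).2, hl2c⟩
        show M.nextLevel (ρ.st i) (ρ.ac i) (levels M d ρ.st ρ.ac i) = some l2
        rw [hl]
        exact hnext
  constructor
  · intro i
    obtain ⟨l, hl, -, -⟩ := inv i
    rw [hl]
    simp
  · intro i
    obtain ⟨l, hl, h1, -⟩ := inv i
    exact ⟨l, hl, h1⟩
end

section
/- Characterization of the minimal safety vector: if R' ⊆ R is such that ml(Reach⁺_{R'})(r) ≤ cap for every r ∈ R', and n = ml(Reach⁺_{R'}), then for every state s with d = ⌈n⌉_{R'}^{cap}(s) ≤ cap there exists a strategy σ such that all σ-compatible runs from s loaded with d are safe; hence ml_S ≤ ⌈ml(Reach⁺_{R'})⌉_{R'}^{cap} where ⌈x⌉_{R'}^{cap}(s) is ∞ if x(s) > cap, 0 if x(s) ≤ cap and s ∈ R', and x(s) otherwise. -/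
open Classical

namespace CMDP

variable {S A : Type} [Fintype S] [Fintype A] [DecidableEq S] [DecidableEq A]

lemma exists_pos_delta (M : CMDP S A) (s : S) (a : A) : ∃ t, 0 < M.δ s a t := by
  by_contra h
  push_neg at h
  have hz : ∀ t, M.δ s a t = 0 := fun t => le_antisymm (h t) zero_le
  have := M.δ_sum s a
  simp [hz] at this

noncomputable def nextState (M : CMDP S A) (s : S) (a : A) : S :=
  Classical.choose (exists_pos_delta M s a)

lemma nextState_pos (M : CMDP S A) (s : S) (a : A) : 0 < M.δ s a (M.nextState s a) :=
  Classical.choose_spec (exists_pos_delta M s a)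

/-- splits a history at the last state belonging to `R'` -/
def segSplit (R' : Finset S) : List (S × A) → Option (S × List (S × A))
  | [] => none
  | p :: t =>
    match segSplit R' t with
    | some r => some r
    | none => if p.1 ∈ R' then some (p.1, p :: t) else none

lemma segSplit_eq_none (R' : Finset S) (h : List (S × A))
    (hh : ∀ p ∈ h, p.1 ∉ R') : segSplit R' h = none := by
  induction h with
  | nil => rfl
  | cons p t ih =>
      have ht : segSplit R' t = none := ih (fun q hq => hh q (List.mem_cons_of_mem _ hq))
      have hp : p.1 ∉ R' := hh p List.mem_cons_self
      simp [segSplit, ht, hp]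

lemma segSplit_eq_some (R' : Finset S) (h₁ h₂ : List (S × A)) (p : S × A)
    (hp : p.1 ∈ R') (hh : ∀ q ∈ h₂, q.1 ∉ R') :
    segSplit R' (h₁ ++ p :: h₂) = some (p.1, p :: h₂) := by
  induction h₁ with
  | nil =>
      have ht : segSplit R' h₂ = none := segSplit_eq_none R' h₂ hh
      simp [segSplit, ht, hp]
  | cons q t ih =>
      simp only [List.cons_append, segSplit, List.append_eq, ih]

/-- the strategy built by composing segment strategies -/
noncomputable def mkStrat (R' : Finset S) (σ₀ : Strat S A) (dOf : S → ℕ) : Strat S A :=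
  fun d h s =>
    if s ∈ R' then σ₀ (dOf s) [] s
    else
      match segSplit R' h with
      | some (r, h') => σ₀ (dOf r) h' s
      | none => σ₀ d h s

/-- a run extending a prefix of length `k`, following `σ₀` afterwards -/
noncomputable def ext (M : CMDP S A) (σ₀ : Strat S A) (n k : ℕ)
    (st0 : ℕ → S) (ac0 : ℕ → A) : ℕ → List (S × A) × S
  | 0 => ([], st0 0)
  | j+1 =>
      let g := ext M σ₀ n k st0 ac0 j
      let a := if j < k then ac0 j else σ₀ n g.1 g.2
      (g.1 ++ [(g.2, a)], if j + 1 ≤ k then st0 (j+1) else M.nextState g.2 a)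

noncomputable def extRun (M : CMDP S A) (σ₀ : Strat S A) (n k : ℕ)
    (st0 : ℕ → S) (ac0 : ℕ → A) : Run S A where
  st := fun j => (ext M σ₀ n k st0 ac0 j).2
  ac := fun j =>
    if j < k then ac0 j
    else σ₀ n (ext M σ₀ n k st0 ac0 j).1 (ext M σ₀ n k st0 ac0 j).2

lemma hist_succ (ρ : Run S A) (j : ℕ) :
    hist ρ (j+1) = hist ρ j ++ [(ρ.st j, ρ.ac j)] := by
  simp [hist, List.range_succ]

lemma extRun_st_zero (M : CMDP S A) (σ₀ : Strat S A) (n k : ℕ)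
    (st0 : ℕ → S) (ac0 : ℕ → A) : (extRun M σ₀ n k st0 ac0).st 0 = st0 0 := rfl

lemma extRun_st (M : CMDP S A) (σ₀ : Strat S A) (n k : ℕ)
    (st0 : ℕ → S) (ac0 : ℕ → A) (j : ℕ) (hj : j ≤ k) :
    (extRun M σ₀ n k st0 ac0).st j = st0 j := by
  cases j with
  | zero => rfl
  | succ i => simp [extRun, ext, hj]

lemma extRun_ac (M : CMDP S A) (σ₀ : Strat S A) (n k : ℕ)
    (st0 : ℕ → S) (ac0 : ℕ → A) (j : ℕ) (hj : j < k) :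
    (extRun M σ₀ n k st0 ac0).ac j = ac0 j := by
  simp [extRun, hj]

lemma hist_extRun (M : CMDP S A) (σ₀ : Strat S A) (n k : ℕ)
    (st0 : ℕ → S) (ac0 : ℕ → A) (j : ℕ) :
    hist (extRun M σ₀ n k st0 ac0) j = (ext M σ₀ n k st0 ac0 j).1 := by
  induction j with
  | zero => rfl
  | succ i ih =>
      rw [hist_succ, ih]
      by_cases hik : i < k
      · simp [ext, extRun, hik]
      · simp [ext, extRun, hik]

lemma extRun_compatible (M : CMDP S A) (σ₀ : Strat S A) (n k : ℕ)
    (st0 : ℕ → S) (ac0 : ℕ → A)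
    (hpre : ∀ i < k, ac0 i = σ₀ n (hist (extRun M σ₀ n k st0 ac0) i) (st0 i))
    (hval : ∀ i, i + 1 ≤ k → 0 < M.δ (st0 i) (ac0 i) (st0 (i+1))) :
    Compatible M σ₀ n (extRun M σ₀ n k st0 ac0) := by
  intro i
  constructor
  · by_cases hik : i < k
    · rw [extRun_ac M σ₀ n k st0 ac0 i hik, extRun_st M σ₀ n k st0 ac0 i (le_of_lt hik)]
      exact hpre i hik
    · show (if i < k then ac0 i else _) = _
      rw [if_neg hik, hist_extRun]
      rfl
  · by_cases hik : i < k
    · rw [extRun_ac M σ₀ n k st0 ac0 i hik, extRun_st M σ₀ n k st0 ac0 i (le_of_lt hik),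
        extRun_st M σ₀ n k st0 ac0 (i+1) hik]
      exact hval i hik
    · have hik' : ¬ i + 1 ≤ k := by omega
      have hst : (extRun M σ₀ n k st0 ac0).st (i+1)
          = M.nextState (ext M σ₀ n k st0 ac0 i).2
              (σ₀ n (ext M σ₀ n k st0 ac0 i).1 (ext M σ₀ n k st0 ac0 i).2) := by
        simp [extRun, ext, hik, hik']
      have hac : (extRun M σ₀ n k st0 ac0).ac i
          = σ₀ n (ext M σ₀ n k st0 ac0 i).1 (ext M σ₀ n k st0 ac0 i).2 := by
        simp [extRun, hik]
      rw [hac, hst]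
      exact nextState_pos M _ _

lemma hist_split (ρ : Run S A) (u m : ℕ) (hum : u ≤ m) :
    hist ρ m = hist ρ u
      ++ (List.range (m - u)).map (fun t => (ρ.st (u + t), ρ.ac (u + t))) := by
  have : m = u + (m - u) := by omega
  rw [this]
  simp [hist, List.range_add, List.map_map, Function.comp]

/-- key lemma: consumption over a window starting at a segment start and
containing no further `R'`-visit is bounded by the segment budget -/
lemma windowSum (M : CMDP S A) (R' : Finset S) (nvec : S → ℕ∞) (σ₀ : Strat S A)
    (hσ₀ : ∀ s (d : ℕ), nvec s = (d : ℕ∞) → SureSat M σ₀ s d (NRReachPlus M R'))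
    (hcap : ∀ r ∈ R', nvec r ≤ (M.cap : ℕ∞))
    (d : ℕ) (ρ : Run S A)
    (hcomp : Compatible M (mkStrat R' σ₀ (fun r => (nvec r).toNat)) d ρ)
    (hs0 : ρ.st 0 ∉ R' → nvec (ρ.st 0) = (d : ℕ∞))
    (u j : ℕ) (hu : u = 0 ∨ ρ.st u ∈ R')
    (hno : ∀ t, u < t → t < j → ρ.st t ∉ R') :
    ∑ t ∈ Finset.Ico u j, M.γ (ρ.st t) (ρ.ac t)
      ≤ (if ρ.st u ∈ R' then (nvec (ρ.st u)).toNat else d) := by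
  by_cases huj : j ≤ u
  · rw [Finset.Ico_eq_empty (by omega)]
    simp
  push_neg at huj
  set n : ℕ := if ρ.st u ∈ R' then (nvec (ρ.st u)).toNat else d with hn
  have hnv : nvec (ρ.st u) = (n : ℕ∞) := by
    by_cases h : ρ.st u ∈ R'
    · have h1 : nvec (ρ.st u) ≠ ⊤ := ne_top_of_le_ne_top (by simp) (hcap _ h)
      rw [hn, if_pos h, ENat.coe_toNat h1]
    · rcases hu with h0 | h'
      · rw [hn, if_neg h]
        rw [h0] at h ⊢
        exact hs0 h
      · exact absurd h' h
  set k : ℕ := j - u with hk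
  have hjk : j = u + k := by omega
  set st0 : ℕ → S := fun t => ρ.st (u + t) with hst0
  set ac0 : ℕ → A := fun t => ρ.ac (u + t) with hac0
  set ρ' := extRun M σ₀ n k st0 ac0 with hρ'
  -- the history of ρ' matches the shifted history of ρ
  have hhist : ∀ i ≤ k, hist ρ' i
      = (List.range i).map (fun t => (ρ.st (u + t), ρ.ac (u + t))) := by
    intro i hi
    unfold hist
    apply List.map_congr_left
    intro t ht
    rw [List.mem_range] at ht
    rw [hρ', extRun_st M σ₀ n k st0 ac0 t (by omega), extRun_ac M σ₀ n k st0 ac0 t (by omega)]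
  -- the prefix of ρ' is consistent with σ₀
  have hpre : ∀ i < k, ac0 i = σ₀ n (hist ρ' i) (st0 i) := by
    intro i hi
    have hcompi := (hcomp (u + i)).1
    rw [hhist i (le_of_lt hi)]
    rcases Nat.eq_zero_or_pos i with hi0 | hipos
    · subst hi0
      simp only [List.range_zero, List.map_nil]
      by_cases h : ρ.st u ∈ R'
      · rw [hac0]
        simp only [Nat.add_zero] at hcompi ⊢
        rw [hcompi]
        show mkStrat R' σ₀ _ d _ _ = _
        rw [mkStrat, if_pos h, hn, if_pos h]
        rfl
      · have hu0 : u = 0 := by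
          rcases hu with h0 | h'
          · exact h0
          · exact absurd h' h
        rw [hac0]
        simp only [Nat.add_zero] at hcompi ⊢
        rw [hcompi, hn, if_neg h, hu0]
        show mkStrat R' σ₀ _ d (hist ρ 0) _ = _
        rw [mkStrat, if_neg (by rw [hu0] at h; exact h)]
        have h0 : hist ρ 0 = ([] : List (S × A)) := by simp [hist]
        rw [h0]
        simp [segSplit, hst0, hu0]
    · -- i ≥ 1 : the current state is not in R'
      have hcur : ρ.st (u + i) ∉ R' := hno (u + i) (by omega) (by omega)
      rw [hac0]
      simp only at hcompi ⊢
      rw [hcompi]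
      show mkStrat R' σ₀ _ d (hist ρ (u + i)) _ = _
      rw [mkStrat, if_neg hcur]
      by_cases h : ρ.st u ∈ R'
      · -- segSplit finds the segment start at u
        have hsplit : hist ρ (u + i) = hist ρ u ++ ((ρ.st u, ρ.ac u)
            :: (List.range (i - 1)).map (fun t => (ρ.st (u + (t+1)), ρ.ac (u + (t+1))))) := by
          rw [hist_split ρ u (u + i) (by omega)]
          congr 1
          have : u + i - u = (i - 1) + 1 := by omega
          rw [this, List.range_succ_eq_map, List.map_cons, List.map_map]
          simp only [Nat.add_zero]
          congr 1
        rw [hsplit, segSplit_eq_some R' _ _ _ h ?noR]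
        case noR =>
          intro q hq
          rw [List.mem_map] at hq
          obtain ⟨t, ht, rfl⟩ := hq
          rw [List.mem_range] at ht
          exact hno (u + (t+1)) (by omega) (by omega)
        simp only
        rw [hn, if_pos h]
        congr 1
        have : i = (i - 1) + 1 := by omega
        rw [this, List.range_succ_eq_map, List.map_cons, List.map_map]
        simp only [Nat.add_zero]
        congr 1
      · have hu0 : u = 0 := by
          rcases hu with h0 | h'
          · exact h0
          · exact absurd h' h
        have hnone : segSplit R' (hist ρ (u + i)) = none := by
          apply segSplit_eq_none
          intro p hp
          rw [hist] at hp
          rw [List.mem_map] at hp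
          obtain ⟨t, ht, rfl⟩ := hp
          rw [List.mem_range] at ht
          rcases Nat.eq_zero_or_pos t with ht0 | htpos
          · subst ht0; rw [← hu0] at *; exact h
          · exact hno t (by omega) (by omega)
        rw [hnone, hn, if_neg h]
        simp [hist, hst0, hu0]
  have hval : ∀ i, i + 1 ≤ k → 0 < M.δ (st0 i) (ac0 i) (st0 (i+1)) := by
    intro i hi
    have := (hcomp (u + i)).2
    rw [hst0, hac0]
    simp only
    have harr : u + i + 1 = u + (i + 1) := by omega
    rw [← harr]
    exact this
  have hcompat : Compatible M σ₀ n ρ' := extRun_compatible M σ₀ n k st0 ac0 hpre hval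
  have hstart : ρ'.st 0 = ρ.st u := rfl
  obtain ⟨f, hf1, hfR, hsum⟩ := hσ₀ (ρ.st u) n hnv ρ' hcompat hstart
  -- f is at least k
  have hkf : k ≤ f := by
    by_contra hfk
    push_neg at hfk
    have : ρ'.st f = ρ.st (u + f) := extRun_st M σ₀ n k st0 ac0 f (le_of_lt hfk)
    rw [this] at hfR
    exact hno (u + f) (by omega) (by omega) hfR
  have hsub : ∑ t ∈ Finset.range k, M.γ (ρ'.st t) (ρ'.ac t)
      ≤ ∑ t ∈ Finset.range f, M.γ (ρ'.st t) (ρ'.ac t) :=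
    Finset.sum_le_sum_of_subset (Finset.range_subset_range.mpr hkf)
  have heq : ∑ t ∈ Finset.range k, M.γ (ρ'.st t) (ρ'.ac t)
      = ∑ t ∈ Finset.range k, M.γ (ρ.st (u + t)) (ρ.ac (u + t)) := by
    apply Finset.sum_congr rfl
    intro t ht
    rw [Finset.mem_range] at ht
    rw [hρ', extRun_st M σ₀ n k st0 ac0 t (le_of_lt ht), extRun_ac M σ₀ n k st0 ac0 t ht]
  have hIco : ∑ t ∈ Finset.Ico u j, M.γ (ρ.st t) (ρ.ac t)
      = ∑ t ∈ Finset.range k, M.γ (ρ.st (u + t)) (ρ.ac (u + t)) := by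
    rw [hjk, Finset.sum_Ico_eq_sum_range]
    simp
  rw [hIco, ← heq]
  exact le_trans hsub hsum

/-- the composed strategy keeps all runs safe -/
lemma allSafeAux (M : CMDP S A) (R' : Finset S) (hR : R' ⊆ M.R)
    (nvec : S → ℕ∞) (σ₀ : Strat S A)
    (hσ₀ : ∀ s (d : ℕ), nvec s = (d : ℕ∞) → SureSat M σ₀ s d (NRReachPlus M R'))
    (hcap : ∀ r ∈ R', nvec r ≤ (M.cap : ℕ∞))
    (s : S) (d : ℕ) (hd : d ≤ M.cap)
    (hs0' : s ∉ R' → nvec s = (d : ℕ∞)) :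
    AllSafe M (mkStrat R' σ₀ (fun r => (nvec r).toNat)) s d := by
  intro ρ hcomp hst0
  have hs0 : ρ.st 0 ∉ R' → nvec (ρ.st 0) = (d : ℕ∞) := by rw [hst0]; exact hs0'
  have hwin := windowSum M R' nvec σ₀ hσ₀ hcap d ρ hcomp hs0
  have hbud : ∀ u, (u = 0 ∨ ρ.st u ∈ R') →
      (if ρ.st u ∈ R' then (nvec (ρ.st u)).toNat else d) ≤ M.cap := by
    intro u _
    by_cases h : ρ.st u ∈ R'
    · rw [if_pos h]
      have hne : nvec (ρ.st u) ≠ ⊤ := ne_top_of_le_ne_top (by simp) (hcap _ h)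
      have h2 : ((nvec (ρ.st u)).toNat : ℕ∞) ≤ (M.cap : ℕ∞) := by
        rw [ENat.coe_toNat hne]; exact hcap _ h
      exact_mod_cast h2
    · rw [if_neg h]; exact hd
  have key : ∀ i, ∃ l, levels M d ρ.st ρ.ac i = some l ∧
      (ρ.st i ∈ M.R ∨ ∀ j, (∀ t, i < t → t < j → ρ.st t ∉ R') →
        ∑ t ∈ Finset.Ico i j, M.γ (ρ.st t) (ρ.ac t) ≤ l) := by
    intro i
    induction i with
    | zero =>
        refine ⟨d, rfl, ?_⟩
        by_cases h0 : ρ.st 0 ∈ M.R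
        · exact Or.inl h0
        · right
          intro j hnoj
          have h0' : ρ.st 0 ∉ R' := fun hx => h0 (hR hx)
          have := hwin 0 j (Or.inl rfl) (fun t ht htj => hnoj t ht htj)
          rwa [if_neg h0'] at this
    | succ i ih =>
        obtain ⟨l, hl, hlP⟩ := ih
        by_cases hiR : ρ.st i ∈ M.R
        · -- reload step
          set u := Nat.findGreatest (fun t => t = 0 ∨ ρ.st t ∈ R') i with hu
          have hPu : u = 0 ∨ ρ.st u ∈ R' := by
            have h := Nat.findGreatest_spec (P := fun t => t = 0 ∨ ρ.st t ∈ R')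
              (Nat.zero_le i) (Or.inl rfl)
            simpa [hu] using h
          have hui : u ≤ i := Nat.findGreatest_le i
          have hmax : ∀ t, u < t → t ≤ i → ρ.st t ∉ R' := by
            intro t h1 h2 hx
            exact (Nat.findGreatest_is_greatest h1 h2) (Or.inr hx)
          have hwini := hwin u (i+1) hPu (fun t ht htj => hmax t ht (by omega))
          have hbi : ∑ t ∈ Finset.Ico u (i+1), M.γ (ρ.st t) (ρ.ac t) ≤ M.cap :=
            le_trans hwini (hbud u hPu)
          have hci : M.γ (ρ.st i) (ρ.ac i) ≤ M.cap := by
            have hmem : i ∈ Finset.Ico u (i+1) :=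
              Finset.mem_Ico.mpr ⟨hui, Nat.lt_succ_self i⟩
            exact le_trans (Finset.single_le_sum
              (f := fun t => M.γ (ρ.st t) (ρ.ac t))
              (fun t _ => Nat.zero_le _) hmem) hbi
          refine ⟨M.cap - M.γ (ρ.st i) (ρ.ac i), ?_, ?_⟩
          · show M.nextLevel (ρ.st i) (ρ.ac i) (levels M d ρ.st ρ.ac i) = _
            rw [hl]
            simp [nextLevel, hiR, hci]
          · by_cases hiR1 : ρ.st (i+1) ∈ M.R
            · exact Or.inl hiR1
            · right
              intro j hnoj
              have hs1 : ρ.st (i+1) ∉ R' := fun hx => hiR1 (hR hx)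
              have hno' : ∀ t, u < t → t < j → ρ.st t ∉ R' := by
                intro t h1 h2
                rcases Nat.lt_or_ge t (i+1) with h3 | h3
                · exact hmax t h1 (by omega)
                · rcases Nat.eq_or_lt_of_le h3 with h4 | h4
                  · rw [← h4]; exact hs1
                  · exact hnoj t (by omega) h2
              have hwinj := le_trans (hwin u j hPu hno') (hbud u hPu)
              by_cases hij : j ≤ i + 1
              · rw [Finset.Ico_eq_empty (by omega)]
                simp [Nat.sub_le_iff_le_add]
              · push_neg at hij
                have hsplit : ∑ t ∈ Finset.Ico i j, M.γ (ρ.st t) (ρ.ac t)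
                    = M.γ (ρ.st i) (ρ.ac i)
                      + ∑ t ∈ Finset.Ico (i+1) j, M.γ (ρ.st t) (ρ.ac t) :=
                  Finset.sum_eq_sum_Ico_succ_bot (by omega) _
                have hsub2 : ∑ t ∈ Finset.Ico i j, M.γ (ρ.st t) (ρ.ac t)
                    ≤ ∑ t ∈ Finset.Ico u j, M.γ (ρ.st t) (ρ.ac t) :=
                  Finset.sum_le_sum_of_subset (Finset.Ico_subset_Ico hui le_rfl)
                omega
        · -- non-reload step
          have hri : ρ.st i ∉ R' := fun hx => hiR (hR hx)
          have hP := hlP.resolve_left hiR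
          have hci : M.γ (ρ.st i) (ρ.ac i) ≤ l := by
            have h1 := hP (i+1) (fun t h1 h2 => (by omega : False).elim)
            simpa [Nat.Ico_succ_singleton] using h1
          refine ⟨l - M.γ (ρ.st i) (ρ.ac i), ?_, ?_⟩
          · show M.nextLevel (ρ.st i) (ρ.ac i) (levels M d ρ.st ρ.ac i) = _
            rw [hl]
            simp [nextLevel, hiR, hci]
          · by_cases hiR1 : ρ.st (i+1) ∈ M.R
            · exact Or.inl hiR1
            · right
              intro j hnoj
              have hs1 : ρ.st (i+1) ∉ R' := fun hx => hiR1 (hR hx)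
              have hno' : ∀ t, i < t → t < j → ρ.st t ∉ R' := by
                intro t h1 h2
                rcases Nat.lt_or_ge t (i+1) with h3 | h3
                · omega
                · rcases Nat.eq_or_lt_of_le h3 with h4 | h4
                  · rw [← h4]; exact hs1
                  · exact hnoj t (by omega) h2
              have hPj := hP j hno'
              by_cases hij : j ≤ i + 1
              · rw [Finset.Ico_eq_empty (by omega)]
                simp
              · push_neg at hij
                have hsplit : ∑ t ∈ Finset.Ico i j, M.γ (ρ.st t) (ρ.ac t)
                    = M.γ (ρ.st i) (ρ.ac i)
                      + ∑ t ∈ Finset.Ico (i+1) j, M.γ (ρ.st t) (ρ.ac t) :=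
                  Finset.sum_eq_sum_Ico_succ_bot (by omega) _
                omega
  intro i
  obtain ⟨l, hl, _⟩ := key i
  rw [hl]
  simp

end CMDP

open CMDP in
/-- if every `r ∈ R'` satisfies `ml(Reach⁺_{R'})(r) ≤ cap`, then
from every state `s` with `⌈ml(Reach⁺_{R'})⌉_{R'}^{cap}(s) = d ≤ cap` some
strategy keeps all runs safe; hence `ml_S ≤ ⌈ml(Reach⁺_{R'})⌉_{R'}^{cap}`. -/
theorem stmt16 {S A : Type} [Fintype S] [Fintype A] [DecidableEq S] [DecidableEq A]
    (M : CMDP S A) (R' : Finset S) (hR : R' ⊆ M.R)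
    (nvec : S → ℕ∞) (hn : IsML (SatVec M (NRReachPlus M R')) nvec)
    (hcap : ∀ r ∈ R', nvec r ≤ (M.cap : ℕ∞))
    (mlS : S → ℕ∞) (hmlS : IsML (SafetySat M) mlS) :
    (∀ (s : S) (d : ℕ), truncRset M R' nvec s = (d : ℕ∞) →
      ∃ σ : Strat S A, AllSafe M σ s d) ∧
    (∀ s : S, mlS s ≤ truncRset M R' nvec s) := by
  obtain ⟨σ₀, hσ₀⟩ := hn.1
  have main : ∀ s (d : ℕ), truncRset M R' nvec s = (d : ℕ∞) →
      AllSafe M (mkStrat R' σ₀ (fun r => (nvec r).toNat)) s d := by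
    intro s d hd
    simp only [truncRset] at hd
    by_cases h1 : (M.cap : ℕ∞) < nvec s
    · rw [if_pos h1] at hd
      exact absurd hd (by simp)
    · rw [if_neg h1] at hd
      push_neg at h1
      by_cases h2 : s ∈ R'
      · rw [if_pos h2] at hd
        exact allSafeAux M R' hR nvec σ₀ hσ₀ hcap s d
          (by have : d = 0 := by exact_mod_cast hd.symm
              omega)
          (fun hs => absurd h2 hs)
      · rw [if_neg h2] at hd
        have hdc : d ≤ M.cap := by
          rw [hd] at h1
          exact_mod_cast h1
        exact allSafeAux M R' hR nvec σ₀ hσ₀ hcap s d hdc (fun _ => hd)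
  constructor
  · intro s d hd
    exact ⟨mkStrat R' σ₀ (fun r => (nvec r).toNat), main s d hd⟩
  · intro s
    exact hmlS.2 _ ⟨mkStrat R' σ₀ (fun r => (nvec r).toNat), main⟩ s
end
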